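/- Let q ∈ ℂ× be not a root of unity, a ∈ ℂ×, n ≥ 1 and d = (d₁,…,d_n) ∈ ℕⁿ. For 1 ≤ i ≤ j ≤ n set k_{ij} = max{0, min{d_k - d_{i-1}, d_k - d_{j+1} : i ≤ k ≤ j}}, with the convention d₀ = d_{n+1} = 0. Then: (a) the multiset consisting, for each pair 1 ≤ i ≤ j ≤ n, of k_{ij} copies of the q-string S_{j-i+1, q^{2i}a} = {q^{2i}a, q^{2i+2}a, …, q^{2j}a} has as its multiset union exactly the multiset consisting of d_m copies of q^{2m}a for m = 1,…,n; and (b) for any two pairs (i,j) ≠ (r,s) with k_{ij} > 0 and k_{rs} > 0, the q-strings S_{j-i+1, q^{2i}a} and S_{s-r+1, q^{2r}a} are in general position. -/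

import Mathlib

open scoped Classical

/-- The `q`-string `S_{n,a} = {a, q²a, …, q^{2(n-1)}a} ⊆ ℂ×`. -/
def qString (q : ℂˣ) (n : ℕ) (a : ℂˣ) : Set ℂˣ :=
  {b | ∃ k, k < n ∧ b = q ^ (2 * k) * a}

/-- Two `q`-strings `S_{n,a}` and `S_{m,b}` are in special position if neither is
contained in the other and their union is again a `q`-string. -/
def SpecialPosition (q : ℂˣ) (n : ℕ) (a : ℂˣ) (m : ℕ) (b : ℂˣ) : Prop :=
  ¬ qString q n a ⊆ qString q m b ∧ ¬ qString q m b ⊆ qString q n a ∧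
    ∃ k c, 1 ≤ k ∧ qString q n a ∪ qString q m b = qString q k c

/-- Two `q`-strings are in general position if they are not in special position. -/
def GeneralPosition (q : ℂˣ) (n : ℕ) (a : ℂˣ) (m : ℕ) (b : ℂˣ) : Prop :=
  ¬ SpecialPosition q n a m b

/-- `k_{ij} = max{0, min{d_k - d_{i-1}, d_k - d_{j+1} : i ≤ k ≤ j}}`
(with the conventions `d₀ = d_{n+1} = 0` imposed on `d` as hypotheses elsewhere). -/
def kij (d : ℕ → ℕ) (i j : ℕ) : ℕ :=
  if h : i ≤ j then
    ((Finset.Icc i j).inf' (Finset.nonempty_Icc.mpr h)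
      fun k => min ((d k : ℤ) - (d (i - 1) : ℤ)) ((d k : ℤ) - (d (j + 1) : ℤ))).toNat
  else 0

section AuxLemmas

variable {q a : ℂˣ}

lemma qpow_inj (hq : ∀ k : ℕ, 1 ≤ k → q ^ k ≠ 1) {x y : ℕ} (h : q ^ x = q ^ y) : x = y := by
  rcases lt_trichotomy x y with hlt | he | hlt
  · exfalso
    apply hq (y - x) (by omega)
    have h2 : q ^ x * q ^ (y - x) = q ^ x * 1 := by
      rw [mul_one, ← pow_add, show x + (y - x) = y from by omega, h]
    exact mul_left_cancel h2
  · exact he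
  · exfalso
    apply hq (x - y) (by omega)
    have h2 : q ^ y * q ^ (x - y) = q ^ y * 1 := by
      rw [mul_one, ← pow_add, show y + (x - y) = x from by omega, ← h]
    exact mul_left_cancel h2

lemma pow_mul_inj (hq : ∀ k : ℕ, 1 ≤ k → q ^ k ≠ 1) {m m' : ℕ}
    (h : q ^ (2 * m) * a = q ^ (2 * m') * a) : m = m' := by
  have := qpow_inj hq (mul_right_cancel h)
  omega

lemma shift_pow (k i : ℕ) : q ^ (2 * k) * (q ^ (2 * i) * a) = q ^ (2 * (k + i)) * a := by
  rw [← mul_assoc, ← pow_add]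
  congr 2
  omega

lemma mem_qString_iff (i j : ℕ) (hij : i ≤ j) (c : ℂˣ) :
    c ∈ qString q (j - i + 1) (q ^ (2 * i) * a) ↔
      ∃ m, i ≤ m ∧ m ≤ j ∧ c = q ^ (2 * m) * a := by
  constructor
  · rintro ⟨k, hk, rfl⟩
    exact ⟨k + i, by omega, by omega, shift_pow k i⟩
  · rintro ⟨m, h1, h2, rfl⟩
    exact ⟨m - i, by omega, by rw [shift_pow, show m - i + i = m from by omega]⟩

lemma pow_mem_qString (hq : ∀ k : ℕ, 1 ≤ k → q ^ k ≠ 1) (p L m : ℕ) :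
    q ^ (2 * m) * a ∈ qString q L (q ^ (2 * p) * a) ↔ p ≤ m ∧ m < p + L := by
  constructor
  · rintro ⟨k, hk, he⟩
    rw [shift_pow] at he
    have := pow_mul_inj hq he
    omega
  · rintro ⟨h1, h2⟩
    exact ⟨m - p, by omega, by rw [shift_pow, show m - p + p = m from by omega]⟩

lemma qString_subset {i j r s : ℕ} (hij : i ≤ j) (hri : r ≤ i) (hjs : j ≤ s) :
    qString q (j - i + 1) (q ^ (2 * i) * a) ⊆ qString q (s - r + 1) (q ^ (2 * r) * a) := by
  intro c hc
  rw [mem_qString_iff i j hij] at hc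
  obtain ⟨m, h1, h2, rfl⟩ := hc
  rw [mem_qString_iff r s (le_trans hri (le_trans hij hjs))]
  exact ⟨m, by omega, by omega, rfl⟩

/-- minimum of `d` over `[i,j]`. -/
def minv (d : ℕ → ℕ) (i j : ℕ) : ℕ :=
  if h : i ≤ j then (Finset.Icc i j).inf' (Finset.nonempty_Icc.mpr h) d else 0

lemma minv_le (d : ℕ → ℕ) {i j k : ℕ} (h1 : i ≤ k) (h2 : k ≤ j) : minv d i j ≤ d k := by
  rw [minv, dif_pos (le_trans h1 h2)]
  exact Finset.inf'_le d (Finset.mem_Icc.mpr ⟨h1, h2⟩)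

lemma exists_minv (d : ℕ → ℕ) {i j : ℕ} (h : i ≤ j) :
    ∃ k, i ≤ k ∧ k ≤ j ∧ minv d i j = d k := by
  rw [minv, dif_pos h]
  obtain ⟨k, hk, he⟩ := Finset.exists_mem_eq_inf' (Finset.nonempty_Icc.mpr h) d
  rw [Finset.mem_Icc] at hk
  exact ⟨k, hk.1, hk.2, he⟩

lemma kij_eq (d : ℕ → ℕ) {i j : ℕ} (h : i ≤ j) :
    kij d i j = minv d i j - max (d (i - 1)) (d (j + 1)) := by
  rw [kij, dif_pos h]
  have key : ((Finset.Icc i j).inf' (Finset.nonempty_Icc.mpr h)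
      fun k => min ((d k : ℤ) - (d (i - 1) : ℤ)) ((d k : ℤ) - (d (j + 1) : ℤ)))
      = (minv d i j : ℤ) - (max (d (i - 1)) (d (j + 1)) : ℕ) := by
    apply le_antisymm
    · obtain ⟨k, hk1, hk2, he⟩ := exists_minv d h
      refine le_trans (Finset.inf'_le _ (Finset.mem_Icc.mpr ⟨hk1, hk2⟩)) ?_
      rw [he]
      push_cast
      omega
    · apply Finset.le_inf'
      intro k hk
      rw [Finset.mem_Icc] at hk
      have := minv_le d hk.1 hk.2
      push_cast
      omega
  rw [key]
  omega

/-- the largest `i ∈ [1,m]` with `d (i-1) < h`. -/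
noncomputable def IFun (d : ℕ → ℕ) (m h : ℕ) : ℕ := sSup {i | (1 ≤ i ∧ i ≤ m) ∧ d (i - 1) < h}

/-- the smallest `j ∈ [m,n]` with `d (j+1) < h`. -/
noncomputable def JFun (d : ℕ → ℕ) (m n h : ℕ) : ℕ := sInf {j | (m ≤ j ∧ j ≤ n) ∧ d (j + 1) < h}

lemma sum_kij (d : ℕ → ℕ) (n : ℕ) (hd0 : d 0 = 0) (hdtop : d (n + 1) = 0)
    (m : ℕ) (hm1 : 1 ≤ m) (hmn : m ≤ n) :
    ∑ i ∈ Finset.Icc 1 m, ∑ j ∈ Finset.Icc m n, kij d i j = d m := by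
  classical
  have hSb : ∀ h : ℕ, BddAbove {i | (1 ≤ i ∧ i ≤ m) ∧ d (i - 1) < h} :=
    fun h => ⟨m, fun x hx => hx.1.2⟩
  have hSne : ∀ h : ℕ, 1 ≤ h → {i | (1 ≤ i ∧ i ≤ m) ∧ d (i - 1) < h}.Nonempty := by
    intro h hh
    exact ⟨1, ⟨le_refl 1, hm1⟩, by rw [Nat.sub_self, hd0]; omega⟩
  have hTne : ∀ h : ℕ, 1 ≤ h → {j | (m ≤ j ∧ j ≤ n) ∧ d (j + 1) < h}.Nonempty := by
    intro h hh
    exact ⟨n, ⟨hmn, le_refl n⟩, by rw [hdtop]; omega⟩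
  have fiber : ∀ i j : ℕ, 1 ≤ i → i ≤ m → m ≤ j → j ≤ n →
      (Finset.Icc 1 (d m)).filter (fun h => (IFun d m h, JFun d m n h) = (i, j)) =
        Finset.Ioc (max (d (i - 1)) (d (j + 1))) (minv d i j) := by
    intro i j h1i him hmj hjn
    have hij : i ≤ j := le_trans him hmj
    ext h
    simp only [Finset.mem_filter, Finset.mem_Icc, Finset.mem_Ioc, Prod.mk.injEq]
    constructor
    · rintro ⟨⟨hh1, hhdm⟩, hsup, hinf⟩
      have hmemS : IFun d m h ∈ {i | (1 ≤ i ∧ i ≤ m) ∧ d (i - 1) < h} :=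
        Nat.sSup_mem (hSne h hh1) (hSb h)
      have hmemT : JFun d m n h ∈ {j | (m ≤ j ∧ j ≤ n) ∧ d (j + 1) < h} :=
        Nat.sInf_mem (hTne h hh1)
      rw [hsup] at hmemS
      rw [hinf] at hmemT
      have hdi : d (i - 1) < h := hmemS.2
      have hdj : d (j + 1) < h := hmemT.2
      refine ⟨by omega, ?_⟩
      have hall : ∀ k, i ≤ k → k ≤ j → h ≤ d k := by
        intro k hk1 hk2
        by_contra hcon
        push_neg at hcon
        rcases lt_trichotomy k m with hkm | hkm | hkm
        · have hmem : k + 1 ∈ {i | (1 ≤ i ∧ i ≤ m) ∧ d (i - 1) < h} :=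
            ⟨⟨by omega, by omega⟩, by simpa using hcon⟩
          have : k + 1 ≤ IFun d m h := le_csSup (hSb h) hmem
          omega
        · subst hkm; omega
        · have hmem : k - 1 ∈ {j | (m ≤ j ∧ j ≤ n) ∧ d (j + 1) < h} :=
            ⟨⟨by omega, by omega⟩, by rw [show k - 1 + 1 = k from by omega]; exact hcon⟩
          have : JFun d m n h ≤ k - 1 := Nat.sInf_le hmem
          omega
      obtain ⟨k, hk1, hk2, he⟩ := exists_minv d hij
      rw [he]
      exact hall k hk1 hk2
    · rintro ⟨hlt, hle⟩
      have hh1 : 1 ≤ h := by omega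
      have hdm : h ≤ d m := le_trans hle (minv_le d him hmj)
      have hiS : i ∈ {i | (1 ≤ i ∧ i ≤ m) ∧ d (i - 1) < h} := ⟨⟨h1i, him⟩, by omega⟩
      have hjT : j ∈ {j | (m ≤ j ∧ j ≤ n) ∧ d (j + 1) < h} := ⟨⟨hmj, hjn⟩, by omega⟩
      refine ⟨⟨hh1, hdm⟩, ?_, ?_⟩
      · have hmem : IFun d m h ∈ {i | (1 ≤ i ∧ i ≤ m) ∧ d (i - 1) < h} :=
          Nat.sSup_mem ⟨i, hiS⟩ (hSb h)
        have hle' : i ≤ IFun d m h := le_csSup (hSb h) hiS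
        by_contra hcon
        have hlt' : i < IFun d m h := by omega
        have hd : minv d i j ≤ d (IFun d m h - 1) :=
          minv_le d (by omega) (by have := hmem.1.2; omega)
        have := hmem.2
        omega
      · have hmem : JFun d m n h ∈ {j | (m ≤ j ∧ j ≤ n) ∧ d (j + 1) < h} :=
          Nat.sInf_mem ⟨j, hjT⟩
        have hle' : JFun d m n h ≤ j := Nat.sInf_le hjT
        by_contra hcon
        have hlt' : JFun d m n h < j := by omega
        have hd : minv d i j ≤ d (JFun d m n h + 1) :=
          minv_le d (by have := hmem.1.1; omega) (by omega)
        have := hmem.2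
        omega
  have hmaps : ∀ h ∈ Finset.Icc 1 (d m),
      (IFun d m h, JFun d m n h) ∈ (Finset.Icc 1 m) ×ˢ (Finset.Icc m n) := by
    intro h hh
    rw [Finset.mem_Icc] at hh
    have hmemS : IFun d m h ∈ {i | (1 ≤ i ∧ i ≤ m) ∧ d (i - 1) < h} :=
      Nat.sSup_mem (hSne h hh.1) (hSb h)
    have hmemT : JFun d m n h ∈ {j | (m ≤ j ∧ j ≤ n) ∧ d (j + 1) < h} :=
      Nat.sInf_mem (hTne h hh.1)
    rw [Finset.mem_product, Finset.mem_Icc, Finset.mem_Icc]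
    exact ⟨⟨hmemS.1.1, hmemS.1.2⟩, ⟨hmemT.1.1, hmemT.1.2⟩⟩
  calc ∑ i ∈ Finset.Icc 1 m, ∑ j ∈ Finset.Icc m n, kij d i j
      = ∑ i ∈ Finset.Icc 1 m, ∑ j ∈ Finset.Icc m n,
          ((Finset.Icc 1 (d m)).filter
            (fun h => (IFun d m h, JFun d m n h) = (i, j))).card := by
        refine Finset.sum_congr rfl fun i hi => Finset.sum_congr rfl fun j hj => ?_
        rw [Finset.mem_Icc] at hi hj
        rw [fiber i j hi.1 hi.2 hj.1 hj.2, Nat.card_Ioc, kij_eq d (le_trans hi.2 hj.1)]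
    _ = (Finset.Icc 1 (d m)).card := by
        rw [Finset.card_eq_sum_card_fiberwise hmaps, Finset.sum_product]
    _ = d m := by rw [Nat.card_Icc]; omega

lemma main_contra (d : ℕ → ℕ) (i j r s : ℕ) (hij : i ≤ j) (hrs : r ≤ s)
    (hir : i < r) (hjs : j < s) (hrj : r ≤ j + 1)
    (P1 : ∀ k, i ≤ k → k ≤ j → d (i - 1) < d k ∧ d (j + 1) < d k)
    (P2 : ∀ k, r ≤ k → k ≤ s → d (r - 1) < d k ∧ d (s + 1) < d k) : False := by
  by_cases h : r ≤ j
  · have A := (P1 (r - 1) (by omega) (by omega)).2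
    have B := (P2 (j + 1) (by omega) (by omega)).1
    omega
  · have hr : r = j + 1 := by omega
    have A := (P1 j hij (le_refl j)).2
    have B := (P2 r (le_refl r) hrs).1
    rw [hr, Nat.add_sub_cancel] at B
    omega

end AuxLemmas

/-- (a) The multiset consisting, for each `1 ≤ i ≤ j ≤ n`, of `k_{ij}` copies of the
`q`-string `S_{j-i+1, q^{2i}a}` has multiset union the multiset of `d_m` copies of
`q^{2m}a` (`m = 1,…,n`); (b) for distinct pairs `(i,j) ≠ (r,s)` with `k_{ij}, k_{rs} > 0`,
the strings `S_{j-i+1, q^{2i}a}` and `S_{s-r+1, q^{2r}a}` are in general position. -/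
theorem kij_decomposition (q : ℂˣ) (hq : ∀ k : ℕ, 1 ≤ k → q ^ k ≠ 1) (a : ℂˣ)
    (n : ℕ) (hn : 1 ≤ n) (d : ℕ → ℕ) (hd0 : d 0 = 0) (hdtop : d (n + 1) = 0) :
    (∀ c : ℂˣ,
      (∑ i ∈ Finset.Icc 1 n, ∑ j ∈ Finset.Icc i n,
        kij d i j * (if c ∈ qString q (j - i + 1) (q ^ (2 * i) * a) then 1 else 0)) =
      ∑ m ∈ Finset.Icc 1 n, d m * (if c = q ^ (2 * m) * a then 1 else 0)) ∧
    (∀ i j r s : ℕ, 1 ≤ i → i ≤ j → j ≤ n → 1 ≤ r → r ≤ s → s ≤ n →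
      (i, j) ≠ (r, s) → 0 < kij d i j → 0 < kij d r s →
      GeneralPosition q (j - i + 1) (q ^ (2 * i) * a) (s - r + 1) (q ^ (2 * r) * a)) := by
  constructor
  · -- part (a)
    intro c
    by_cases hc : ∃ m : ℕ, c = q ^ (2 * m) * a
    · obtain ⟨m, rfl⟩ := hc
      have hrhs : ∀ m' : ℕ, ((q ^ (2 * m) * a : ℂˣ) = q ^ (2 * m') * a) ↔ m' = m :=
        fun m' => ⟨fun h => (pow_mul_inj hq h).symm, fun h => by rw [h]⟩
      have step1 : (∑ i ∈ Finset.Icc 1 n, ∑ j ∈ Finset.Icc i n,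
          kij d i j * (if (q ^ (2 * m) * a : ℂˣ) ∈
            qString q (j - i + 1) (q ^ (2 * i) * a) then 1 else 0)) =
          ∑ i ∈ Finset.Icc 1 n, ∑ j ∈ Finset.Icc i n,
            (if i ≤ m ∧ m ≤ j then kij d i j else 0) := by
        refine Finset.sum_congr rfl fun i hi => Finset.sum_congr rfl fun j hj => ?_
        rw [Finset.mem_Icc] at hi hj
        have hmem : (q ^ (2 * m) * a : ℂˣ) ∈ qString q (j - i + 1) (q ^ (2 * i) * a)
            ↔ (i ≤ m ∧ m ≤ j) := by
          rw [pow_mem_qString hq]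
          omega
        simp only [hmem, mul_ite, mul_one, mul_zero]
      have step2 : (∑ m' ∈ Finset.Icc 1 n, d m' *
            (if (q ^ (2 * m) * a : ℂˣ) = q ^ (2 * m') * a then 1 else 0)) =
          if m ∈ Finset.Icc 1 n then d m else 0 := by
        simp only [hrhs, mul_ite, mul_one, mul_zero]
        exact Finset.sum_ite_eq' (Finset.Icc 1 n) m (fun m' => d m')
      rw [step1, step2]
      have step3 : ∀ i ∈ Finset.Icc 1 n,
          (∑ j ∈ Finset.Icc i n, if i ≤ m ∧ m ≤ j then kij d i j else 0) =
            if i ≤ m then ∑ j ∈ Finset.Icc m n, kij d i j else 0 := by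
        intro i hi
        rw [Finset.mem_Icc] at hi
        by_cases him : i ≤ m
        · rw [if_pos him]
          rw [← Finset.sum_filter]
          congr 1
          ext j
          simp only [Finset.mem_filter, Finset.mem_Icc]
          omega
        · rw [if_neg him]
          apply Finset.sum_eq_zero
          intro j hj
          rw [if_neg (fun h => him h.1)]
      rw [Finset.sum_congr rfl step3, ← Finset.sum_filter]
      by_cases hm : 1 ≤ m ∧ m ≤ n
      · rw [if_pos (Finset.mem_Icc.mpr hm)]
        have hfil : (Finset.Icc 1 n).filter (fun i => i ≤ m) = Finset.Icc 1 m := by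
          ext i
          simp only [Finset.mem_filter, Finset.mem_Icc]
          omega
        rw [hfil]
        exact sum_kij d n hd0 hdtop m hm.1 hm.2
      · rw [if_neg (fun h => hm (Finset.mem_Icc.mp h))]
        apply Finset.sum_eq_zero
        intro i hi
        simp only [Finset.mem_filter, Finset.mem_Icc] at hi
        have hmn : n < m := by omega
        rw [Finset.Icc_eq_empty (by omega), Finset.sum_empty]
    · have h1 : ∀ i j : ℕ, c ∉ qString q (j - i + 1) (q ^ (2 * i) * a) := by
        rintro i j ⟨k, hk, rfl⟩
        exact hc ⟨k + i, shift_pow k i⟩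
      have h2 : ∀ m' : ℕ, c ≠ q ^ (2 * m') * a := fun m' h => hc ⟨m', h⟩
      simp [h1, h2]
  · -- part (b)
    intro i j r s h1i hij hjn h1r hrs hsn hne hki hkr
    intro hsp
    obtain ⟨hns1, hns2, k, c0, hk1, hun⟩ := hsp
    have P1 : ∀ k', i ≤ k' → k' ≤ j → d (i - 1) < d k' ∧ d (j + 1) < d k' := by
      intro k' ha hb
      have h3 := kij_eq d hij
      have h4 := minv_le d ha hb
      omega
    have P2 : ∀ k', r ≤ k' → k' ≤ s → d (r - 1) < d k' ∧ d (s + 1) < d k' := by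
      intro k' ha hb
      have h3 := kij_eq d hrs
      have h4 := minv_le d ha hb
      omega
    have hc0mem : c0 ∈ qString q (j - i + 1) (q ^ (2 * i) * a) ∪
        qString q (s - r + 1) (q ^ (2 * r) * a) := by
      rw [hun]
      exact ⟨0, hk1, by simp⟩
    obtain ⟨t, hc0⟩ : ∃ t : ℕ, c0 = q ^ (2 * t) * a := by
      rcases hc0mem with h | h
      · obtain ⟨mm, _, _, he⟩ := (mem_qString_iff i j hij c0).mp h
        exact ⟨mm, he⟩
      · obtain ⟨mm, _, _, he⟩ := (mem_qString_iff r s hrs c0).mp h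
        exact ⟨mm, he⟩
    subst hc0
    have H' : ∀ mm : ℕ, ((i ≤ mm ∧ mm ≤ j) ∨ (r ≤ mm ∧ mm ≤ s)) ↔ (t ≤ mm ∧ mm < t + k) := by
      intro mm
      constructor
      · intro hmm
        have hmem : (q ^ (2 * mm) * a : ℂˣ) ∈ qString q k (q ^ (2 * t) * a) := by
          rw [← hun]
          rcases hmm with h | h
          · exact Or.inl ((mem_qString_iff i j hij _).mpr ⟨mm, h.1, h.2, rfl⟩)
          · exact Or.inr ((mem_qString_iff r s hrs _).mpr ⟨mm, h.1, h.2, rfl⟩)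
        exact (pow_mem_qString hq t k mm).mp hmem
      · intro hmm
        have hmem : (q ^ (2 * mm) * a : ℂˣ) ∈ qString q (j - i + 1) (q ^ (2 * i) * a) ∪
            qString q (s - r + 1) (q ^ (2 * r) * a) := by
          rw [hun]
          exact (pow_mem_qString hq t k mm).mpr hmm
        rcases hmem with h | h
        · obtain ⟨m', hm1, hm2, he⟩ := (mem_qString_iff i j hij _).mp h
          have := pow_mul_inj hq he
          omega
        · obtain ⟨m', hm1, hm2, he⟩ := (mem_qString_iff r s hrs _).mp h
          have := pow_mul_inj hq he
          omega
    have Hi := (H' i).mp (Or.inl ⟨le_refl i, hij⟩)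
    have Hj := (H' j).mp (Or.inl ⟨hij, le_refl j⟩)
    have Hr := (H' r).mp (Or.inr ⟨le_refl r, hrs⟩)
    have Hs := (H' s).mp (Or.inr ⟨hrs, le_refl s⟩)
    have hnn1 : ¬(r ≤ i ∧ j ≤ s) := fun h => hns1 (qString_subset hij h.1 h.2)
    have hnn2 : ¬(i ≤ r ∧ s ≤ j) := fun h => hns2 (qString_subset hrs h.1 h.2)
    rcases lt_trichotomy i r with hir | hireq | hri
    · have hjs : j < s := by
        by_contra hcon
        push_neg at hcon
        exact hnn2 ⟨le_of_lt hir, hcon⟩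
      have hrj : r ≤ j + 1 := by
        by_contra hcon
        have := (H' (j + 1)).mpr (by omega)
        omega
      exact main_contra d i j r s hij hrs hir hjs hrj P1 P2
    · rcases lt_trichotomy j s with h | h | h
      · exact hnn1 ⟨by omega, by omega⟩
      · exact hne (by rw [hireq, h])
      · exact hnn2 ⟨by omega, by omega⟩
    · have hsj : s < j := by
        by_contra hcon
        push_neg at hcon
        exact hnn1 ⟨le_of_lt hri, hcon⟩
      have hiz : i ≤ s + 1 := by
        by_contra hcon
        have := (H' (s + 1)).mpr (by omega)
        omega
      exact main_contra d r s i j hrs hij hri hsj hiz P2 P1
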